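/- If a crowded topological space Y can be written as the union of at most n hereditarily irresolvable subspaces, then Y is not (n+1)-resolvable. Consequently, if a space is the disjoint union of n dense submaximal subspaces, then it contains no (n+1)-resolvable subspace. -/
import Mathlib


open Cardinal Set

universe u

variable {X : Type u} [TopologicalSpace X]

/-- `T` is a dense subset of the subspace `S`. -/
def DenseIn (T S : Set X) : Prop := T ⊆ S ∧ S ⊆ closure T

/-- `S` is crowded (dense-in-itself): it has no isolated points. -/
def Crowded (S : Set X) : Prop := ∀ x ∈ S, x ∈ closure (S \ {x})

/-- `A` is hereditarily irresolvable: no nonempty crowded subspace of `A` contains two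
disjoint dense subsets. -/
def HeredIrres (A : Set X) : Prop :=
  ∀ B ⊆ A, B.Nonempty → Crowded B →
    ¬ ∃ T₁ T₂ : Set X, DenseIn T₁ B ∧ DenseIn T₂ B ∧ Disjoint T₁ T₂

/-- The subspace `A` is `μ`-resolvable: it contains `μ` pairwise disjoint dense
subsets. -/
def ResolvCard (μ : Cardinal.{u}) (A : Set X) : Prop :=
  ∃ 𝒮 : Set (Set X), #↥𝒮 = μ ∧ 𝒮.PairwiseDisjoint id ∧ ∀ T ∈ 𝒮, DenseIn T A

/-- The subspace `A` is submaximal: every dense subset of `A` is relatively open. -/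
def SubmaximalIn (A : Set X) : Prop :=
  ∀ T : Set X, DenseIn T A → ∃ U : Set X, IsOpen U ∧ T = U ∩ A

/-- Finite intersections of dense open sets are dense. -/
lemma aux_dense_iInter_fin {Z : Type u} [TopologicalSpace Z] :
    ∀ {m : ℕ} (s : Fin m → Set Z), (∀ j, IsOpen (s j)) → (∀ j, Dense (s j)) →
      Dense (⋂ j, s j) := by
  intro m
  induction m with
  | zero => intro s _ _; rw [Set.iInter_of_empty]; exact dense_univ
  | succ m ih =>
    intro s hso hsd
    have hdec : (⋂ j, s j) = s 0 ∩ ⋂ i : Fin m, s i.succ := by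
      ext x
      simp only [mem_iInter, mem_inter_iff]
      constructor
      · exact fun h => ⟨h 0, fun i => h i.succ⟩
      · rintro ⟨h0, h⟩ j
        rcases Fin.eq_zero_or_eq_succ j with rfl | ⟨i, rfl⟩
        · exact h0
        · exact h i
    rw [hdec]
    exact (hsd 0).inter_of_isOpen_left
      (ih (fun i => s i.succ) (fun i => hso i.succ) (fun i => hsd i.succ)) (hso 0)

/-- If finitely many closed sets cover the space, the union of their interiors is dense. -/
lemma aux_dense_iUnion_interior {Z : Type u} [TopologicalSpace Z] {m : ℕ}
    (F : Fin m → Set Z) (hF : ∀ i, IsClosed (F i)) (hcov : (⋃ i, F i) = Set.univ) :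
    Dense (⋃ i, interior (F i)) := by
  have hsub : (⋂ i, (frontier (F i))ᶜ) ⊆ ⋃ i, interior (F i) := by
    intro x hx
    have hxU : x ∈ ⋃ i, F i := hcov ▸ mem_univ x
    obtain ⟨i, hi⟩ := mem_iUnion.mp hxU
    by_cases hint : x ∈ interior (F i)
    · exact mem_iUnion.mpr ⟨i, hint⟩
    · exfalso
      have : x ∈ frontier (F i) := ⟨subset_closure hi, hint⟩
      exact (mem_iInter.mp hx i) this
  have hdense : Dense (⋂ i, (frontier (F i))ᶜ) := by
    apply aux_dense_iInter_fin
    · exact fun i => isClosed_frontier.isOpen_compl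
    · exact fun i => interior_eq_empty_iff_dense_compl.mp (interior_frontier (hF i))
  exact hdense.mono hsub

/-- Core lemma: a space covered by `n` hereditarily irresolvable sets does not admit
`n+1` pairwise disjoint dense subsets. -/
lemma aux_core {Z : Type u} [TopologicalSpace Z] [Nonempty Z] {n : ℕ}
    (A : Fin n → Set Z) (hcov : (⋃ i, A i) = Set.univ)
    (hHI : ∀ i, HeredIrres (A i))
    (D : Fin (n + 1) → Set Z) (hD : ∀ j, Dense (D j))
    (hdisj : ∀ j k, j ≠ k → Disjoint (D j) (D k)) : False := by
  set E : Fin n → Fin (n + 1) → Set Z := fun i j => A i ∩ D j with hE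
  -- the unions of closures cover
  have hclcov : ∀ j, (⋃ i, closure (E i j)) = Set.univ := by
    intro j
    apply Set.eq_univ_of_univ_subset
    have h1 : D j ⊆ ⋃ i, closure (E i j) := by
      intro d hd
      have : d ∈ ⋃ i, A i := hcov ▸ mem_univ d
      obtain ⟨i, hi⟩ := mem_iUnion.mp this
      exact mem_iUnion.mpr ⟨i, subset_closure ⟨hi, hd⟩⟩
    have h2 : IsClosed (⋃ i, closure (E i j)) :=
      isClosed_iUnion_of_finite fun i => isClosed_closure
    calc Set.univ = closure (D j) := ((hD j).closure_eq).symm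
      _ ⊆ ⋃ i, closure (E i j) := h2.closure_subset_iff.mpr h1
  have hGj : ∀ j, Dense (⋃ i, interior (closure (E i j))) := fun j =>
    aux_dense_iUnion_interior _ (fun i => isClosed_closure) (hclcov j)
  have hG : Dense (⋂ j, ⋃ i, interior (closure (E i j))) :=
    aux_dense_iInter_fin _ (fun j => isOpen_iUnion fun i => isOpen_interior) hGj
  obtain ⟨x, hx⟩ := hG.nonempty
  have hex : ∀ j, ∃ i, x ∈ interior (closure (E i j)) := fun j =>
    mem_iUnion.mp (mem_iInter.mp hx j)
  choose f hf using hex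
  obtain ⟨j, k, hjk, hfjk⟩ := Fintype.exists_ne_map_eq_of_card_lt f (by simp)
  set i₀ := f j with hi₀
  have hxj : x ∈ interior (closure (E i₀ j)) := hf j
  have hxk : x ∈ interior (closure (E i₀ k)) := by
    have h' : f j = f k := hfjk
    rw [hi₀, h']; exact hf k
  set V : Set Z := interior (closure (E i₀ j)) ∩ interior (closure (E i₀ k)) with hV
  have hVopen : IsOpen V := isOpen_interior.inter isOpen_interior
  have hxV : x ∈ V := ⟨hxj, hxk⟩
  set T₁ : Set Z := V ∩ E i₀ j with hT₁
  set T₂ : Set Z := V ∩ E i₀ k with hT₂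
  -- every point of V is in the closure of both T₁ and T₂
  have hclT : ∀ y ∈ V, y ∈ closure T₁ ∧ y ∈ closure T₂ := by
    intro y hy
    constructor
    · exact hVopen.inter_closure ⟨hy, interior_subset hy.1⟩
    · exact hVopen.inter_closure ⟨hy, interior_subset hy.2⟩
  have hT₁ne : T₁.Nonempty := by
    rcases closure_nonempty_iff.mp ⟨x, (hclT x hxV).1⟩ with h; exact h
  have hdisjT : Disjoint T₁ T₂ :=
    (hdisj j k hjk).mono (fun y hy => hy.2.2) (fun y hy => hy.2.2)
  set B : Set Z := T₁ ∪ T₂ with hB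
  have hBA : B ⊆ A i₀ := by
    rintro y (⟨_, hy, _⟩ | ⟨_, hy, _⟩) <;> exact hy
  have hBV : B ⊆ V := by rintro y (hy | hy) <;> exact hy.1
  have hcr : Crowded B := by
    intro y hy
    rcases hy with hy1 | hy2
    · have h2 : T₂ ⊆ B \ {y} := by
        intro z hz
        refine ⟨Or.inr hz, ?_⟩
        intro hzy
        have hzz : z = y := hzy
        exact (hdisj j k hjk).ne_of_mem hy1.2.2 (hzz ▸ hz.2.2) rfl
      exact closure_mono h2 (hclT y hy1.1).2
    · have h1 : T₁ ⊆ B \ {y} := by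
        intro z hz
        refine ⟨Or.inl hz, ?_⟩
        intro hzy
        have hzz : z = y := hzy
        exact (hdisj j k hjk).ne_of_mem (hzz ▸ hz.2.2) hy2.2.2 rfl
      exact closure_mono h1 (hclT y hy2.1).1
  refine hHI i₀ B hBA (hT₁ne.mono subset_union_left) hcr ⟨T₁, T₂, ?_, ?_, hdisjT⟩
  · exact ⟨subset_union_left, fun y hy => (hclT y (hBV hy)).1⟩
  · exact ⟨subset_union_right, fun y hy => (hclT y (hBV hy)).2⟩

/-- Submaximal subspaces are hereditarily irresolvable. -/
lemma aux_submax_HI {A : Set X} (h : SubmaximalIn A) : HeredIrres A := by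
  rintro B hBA hBne _hcr ⟨T₁, T₂, ⟨hT₁B, hBT₁⟩, ⟨hT₂B, hBT₂⟩, hdis⟩
  have hdense : DenseIn (T₁ ∪ (A \ closure T₁)) A := by
    constructor
    · rintro y (hy | hy)
      · exact hBA (hT₁B hy)
      · exact hy.1
    · intro a ha
      by_cases hc : a ∈ closure T₁
      · exact closure_mono subset_union_left hc
      · exact subset_closure (Or.inr ⟨ha, hc⟩)
  obtain ⟨U, hUopen, hUeq⟩ := h _ hdense
  have hT₁eq : T₁ = U ∩ B := by
    ext y
    constructor
    · intro hy
      have : y ∈ U ∩ A := hUeq ▸ Or.inl hy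
      exact ⟨this.1, hT₁B hy⟩
    · rintro ⟨hyU, hyB⟩
      have : y ∈ T₁ ∪ (A \ closure T₁) := hUeq ▸ ⟨hyU, hBA hyB⟩
      rcases this with hy | hy
      · exact hy
      · exact absurd (hBT₁ hyB) hy.2
  obtain ⟨b, hb⟩ := hBne
  obtain ⟨t, ht⟩ : T₁.Nonempty := closure_nonempty_iff.mp ⟨b, hBT₁ hb⟩
  have htU : t ∈ U := (hT₁eq ▸ ht).1
  have htT₂ : t ∈ closure T₂ := hBT₂ (hT₁B ht)
  obtain ⟨z, hzU, hzT₂⟩ := mem_closure_iff.mp htT₂ U hUopen htU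
  have hzT₁ : z ∈ T₁ := hT₁eq ▸ ⟨hzU, hT₂B hzT₂⟩
  exact (hdis.ne_of_mem hzT₁ hzT₂) rfl

/-- Hereditary irresolvability transfers to preimages in a subspace. -/
lemma aux_HI_restrict (S A : Set X) (h : HeredIrres A) :
    HeredIrres ((fun x : ↥S => (x : X)) ⁻¹' A) := by
  intro B' hB'A hB'ne hcr' ⟨T₁', T₂', ⟨hT₁B, hBT₁⟩, ⟨hT₂B, hBT₂⟩, hdis⟩
  set v : ↥S → X := fun x => (x : X) with hv
  have hvinj : Function.Injective v := Subtype.val_injective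
  apply h (v '' B') (fun y ⟨y', hy', hyy⟩ => hyy ▸ hB'A hy')
    (hB'ne.image v)
  · -- Crowded
    rintro y ⟨y', hy', rfl⟩
    have := hcr' y' hy'
    rw [closure_subtype] at this
    have himg : v '' (B' \ {y'}) = v '' B' \ {v y'} := by
      rw [Set.image_diff hvinj, Set.image_singleton]
    rwa [himg] at this
  · refine ⟨v '' T₁', v '' T₂', ⟨Set.image_mono hT₁B, ?_⟩,
      ⟨Set.image_mono hT₂B, ?_⟩, (Set.disjoint_image_iff hvinj).mpr hdis⟩
    · rintro y ⟨y', hy', rfl⟩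
      have := hBT₁ hy'
      rwa [closure_subtype] at this
    · rintro y ⟨y', hy', rfl⟩
      have := hBT₂ hy'
      rwa [closure_subtype] at this

/-- Extract `n+1` pairwise disjoint dense sets from `ResolvCard (n+1)`. -/
lemma aux_extract {μA : Set X} {m : ℕ} (h : ResolvCard (m : Cardinal.{u}) μA) :
    ∃ D : Fin m → Set X, Function.Injective D ∧
      (∀ j k, j ≠ k → Disjoint (D j) (D k)) ∧ ∀ j, DenseIn (D j) μA := by
  obtain ⟨𝒮, hcard, hpd, hdense⟩ := h
  obtain ⟨e⟩ := Cardinal.mk_eq_nat_iff.mp hcard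
  refine ⟨fun j => ((e.symm j : ↥𝒮) : Set X), ?_, ?_, fun j => hdense _ (e.symm j).2⟩
  · intro j k hjk
    exact e.symm.injective (Subtype.val_injective hjk)
  · intro j k hjk
    have hne : ((e.symm j : Set X)) ≠ ((e.symm k : Set X)) := by
      intro hh
      exact hjk (e.symm.injective (Subtype.val_injective hh))
    exact hpd (e.symm j).2 (e.symm k).2 hne

/-- (1) If a crowded space is the union of at most `n ≥ 1` hereditarily irresolvable
subspaces then it is not `(n+1)`-resolvable. (2) Consequently, a space that is the
disjoint union of `n` dense submaximal subspaces contains no `(n+1)`-resolvable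
subspace. -/
theorem stmt_17 (n : ℕ) (hn : 1 ≤ n) :
    (∀ (Y : Type u) [TopologicalSpace Y], ∀ A : Fin n → Set Y,
      (∀ x : Y, x ∈ closure {y | y ≠ x}) → (⋃ i, A i) = Set.univ →
      (∀ i, HeredIrres (A i)) →
      ¬ ResolvCard ((n + 1 : ℕ) : Cardinal.{u}) (Set.univ : Set Y)) ∧
    (∀ (Y : Type u) [TopologicalSpace Y], ∀ A : Fin n → Set Y,
      (⋃ i, A i) = Set.univ → Pairwise (Function.onFun Disjoint A) →
      (∀ i, Dense (A i) ∧ SubmaximalIn (A i)) →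
      ∀ S : Set Y, ¬ ResolvCard ((n + 1 : ℕ) : Cardinal.{u}) S) := by
  have h01 : (0 : Fin (n + 1)) ≠ 1 := by
    intro hh
    have := Fin.val_eq_val 0 1 |>.mpr hh
    simp [Fin.val_one, Nat.mod_eq_of_lt (by omega : 1 < n + 1)] at this
  constructor
  · intro Y _ A _hcrowd hcov hHI hres
    obtain ⟨D, hinj, hdisj, hdense⟩ := aux_extract hres
    by_cases hne : Nonempty Y
    · have hD : ∀ j, Dense (D j) := by
        intro j
        have := (hdense j).2
        intro y
        exact this (mem_univ y)
      exact aux_core A hcov hHI D hD hdisj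
    · have hempty : ∀ s : Set Y, s = ∅ := by
        intro s
        ext y
        exact absurd ⟨y⟩ hne
      exact h01 (hinj ((hempty (D 0)).trans (hempty (D 1)).symm))
  · intro Y _ A hcov _hpw hAs S hres
    obtain ⟨D, hinj, hdisj, hdense⟩ := aux_extract hres
    by_cases hSne : S.Nonempty
    · haveI : Nonempty ↥S := hSne.to_subtype
      set v : ↥S → Y := fun x => (x : Y) with hv
      apply aux_core (Z := ↥S) (fun i => v ⁻¹' (A i))
      · apply eq_univ_of_forall
        intro x
        have : (x : Y) ∈ ⋃ i, A i := hcov ▸ mem_univ _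
        obtain ⟨i, hi⟩ := mem_iUnion.mp this
        exact mem_iUnion.mpr ⟨i, hi⟩
      · exact fun i => aux_HI_restrict S (A i) (aux_submax_HI (hAs i).2)
      · intro j
        intro x
        rw [closure_subtype]
        have himg : v '' (v ⁻¹' D j) = D j := by
          rw [Subtype.image_preimage_coe, Set.inter_eq_right.mpr (hdense j).1]
        rw [himg]
        exact (hdense j).2 x.2
      · intro j k hjk
        exact Disjoint.preimage v (hdisj j k hjk)
    · have hempty : ∀ j, D j = ∅ := fun j =>
        Set.subset_empty_iff.mp ((Set.not_nonempty_iff_eq_empty.mp hSne) ▸ (hdense j).1)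
      exact h01 (hinj ((hempty 0).trans (hempty 1).symm))
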